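/- The principal branch of the quaternionic logarithm log₀(q) = log|q| + Arg(q) satisfies exp(log₀(q)) = q for all q ∈ ℍ \ (-∞, 0]. -/

import Mathlib

open Quaternion Set

/-- The quaternionic exponential, given by the power series `∑ qᵏ/k!`. -/
noncomputable def qexp (q : ℍ[ℝ]) : ℍ[ℝ] := NormedSpace.exp q

/-- The slice argument `arg_ℐ(q) ∈ (0,π)` of a nonreal quaternion. -/
noncomputable def sliceArg (q : ℍ[ℝ]) : ℝ := Real.arccos (q.re / ‖q‖)

/-- The imaginary unit `ℐ(q)` of a nonreal quaternion. -/
noncomputable def unitIm (q : ℍ[ℝ]) : ℍ[ℝ] := ‖q.im‖⁻¹ • q.im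

/- `Arg(q) = ℐ(q)·arg_ℐ(q)` for nonreal `q`, and `0` on the reals. -/
open scoped Classical in
noncomputable def qArg (q : ℍ[ℝ]) : ℍ[ℝ] :=
  if q.im = 0 then 0 else sliceArg q • unitIm q

/-- The `2k`-th branch of the quaternionic argument:
`Arg_{2k}(q) = ℐ(q)·(arg_ℐ(q) + 2kπ)`. -/
noncomputable def qArg2k (k : ℤ) (q : ℍ[ℝ]) : ℍ[ℝ] :=
  (sliceArg q + 2 * (k : ℝ) * Real.pi) • unitIm q

lemma norm_sq_decomp (q : ℍ[ℝ]) : ‖q‖ ^ 2 = q.re ^ 2 + ‖q.im‖ ^ 2 := by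
  have h1 : ‖q‖ ^ 2 = Quaternion.normSq q := by
    rw [Quaternion.normSq_eq_norm_mul_self, sq]
  have h2 : ‖q.im‖ ^ 2 = Quaternion.normSq q.im := by
    rw [Quaternion.normSq_eq_norm_mul_self, sq]
  rw [h1, h2, Quaternion.normSq_def', Quaternion.normSq_def']
  simp [Quaternion.re_im, Quaternion.imI_im, Quaternion.imJ_im, Quaternion.imK_im]
  ring

theorem exp_principal_log (q : ℍ[ℝ]) (hq : ¬ (q.im = 0 ∧ q.re ≤ 0)) :
    qexp (((Real.log ‖q‖ : ℝ) : ℍ[ℝ]) + qArg q) = q := by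
  by_cases him : q.im = 0
  · have hre : 0 < q.re := by
      rcases lt_or_ge 0 q.re with h | h
      · exact h
      · exact absurd ⟨him, h⟩ hq
    have hq' : q = ((q.re : ℝ) : ℍ[ℝ]) := by
      conv_lhs => rw [← Quaternion.re_add_im q, him, add_zero]
    have hnorm : ‖q‖ = q.re := by
      conv_lhs => rw [hq']
      rw [Quaternion.norm_coe, Real.norm_eq_abs, abs_of_pos hre]
    rw [qArg, if_pos him, add_zero, qexp, Quaternion.exp_coe,
      ← Real.exp_eq_exp_ℝ, hnorm, Real.exp_log hre]
    exact hq'.symm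
  · -- nonreal case
    have hq0 : q ≠ 0 := fun h => him (by simp [h])
    have hn : (0:ℝ) < ‖q‖ := norm_pos_iff.mpr hq0
    have hin : (0:ℝ) < ‖q.im‖ := norm_pos_iff.mpr him
    set θ := sliceArg q with hθdef
    set I := unitIm q with hIdef
    have hre2 : q.re ^ 2 ≤ ‖q‖ ^ 2 := by
      nlinarith [norm_sq_decomp q, sq_nonneg ‖q.im‖]
    have hratio : q.re / ‖q‖ ∈ Set.Icc (-1:ℝ) 1 := by
      constructor
      · rw [le_div_iff₀ hn]
        nlinarith [sq_nonneg (q.re + ‖q‖)]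
      · rw [div_le_one hn]
        nlinarith [sq_nonneg (q.re - ‖q‖)]
    have hcos : Real.cos θ = q.re / ‖q‖ :=
      Real.cos_arccos hratio.1 hratio.2
    have hsin : Real.sin θ = ‖q.im‖ / ‖q‖ := by
      rw [hθdef, sliceArg, Real.sin_arccos]
      have h1 : 1 - (q.re / ‖q‖) ^ 2 = (‖q.im‖ / ‖q‖) ^ 2 := by
        field_simp
        nlinarith [norm_sq_decomp q]
      rw [h1, Real.sqrt_sq (by positivity)]
    have hθpos : 0 < θ := by
      apply Real.arccos_pos.mpr
      rw [div_lt_one hn]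
      nlinarith [norm_sq_decomp q, mul_pos hin hin, sq_nonneg (q.re - ‖q‖)]
    have hIre : I.re = 0 := by simp [hIdef, unitIm, Quaternion.re_smul]
    have hInorm : ‖I‖ = 1 := by
      rw [hIdef, unitIm, norm_smul, norm_inv, norm_norm,
        inv_mul_cancel₀ hin.ne']
    set w : ℍ[ℝ] := ((Real.log ‖q‖ : ℝ) : ℍ[ℝ]) + θ • I with hw
    have hwre : w.re = Real.log ‖q‖ := by
      simp [hw, Quaternion.re_smul, hIre]
    have hwim : w.im = θ • I := by
      have : (θ • I).im = θ • I := by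
        ext <;> simp [Quaternion.re_smul, hIre]
      simp [hw, Quaternion.im_add, Quaternion.im_coe, this]
    have hwimnorm : ‖w.im‖ = θ := by
      rw [hwim, norm_smul, hInorm, mul_one, Real.norm_eq_abs,
        abs_of_pos hθpos]
    rw [qArg, if_neg him, qexp]
    rw [show ((Real.log ‖q‖ : ℝ) : ℍ[ℝ]) + sliceArg q • unitIm q = w from rfl]
    rw [Quaternion.exp_eq, hwre, hwimnorm, hwim]
    rw [show NormedSpace.exp (Real.log ‖q‖) = ‖q‖ by
      rw [← Real.exp_eq_exp_ℝ, Real.exp_log hn]]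
    rw [smul_smul, div_mul_cancel₀ _ hθpos.ne', hsin, hcos]
    rw [hIdef, unitIm, smul_smul]
    have e1 : ‖q.im‖ / ‖q‖ * ‖q.im‖⁻¹ = ‖q‖⁻¹ := by field_simp
    rw [e1, smul_add, smul_smul, mul_inv_cancel₀ hn.ne', one_smul]
    have e2 : ‖q‖ • ((q.re / ‖q‖ : ℝ) : ℍ[ℝ]) = ((q.re : ℝ) : ℍ[ℝ]) := by
      rw [← Quaternion.coe_mul_eq_smul, ← Quaternion.coe_mul,
        mul_div_cancel₀ _ hn.ne']
    rw [e2, Quaternion.re_add_im]
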